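/- Let λ = (λ_1 ≥ λ_2 ≥ ... ≥ λ_{2l} > 0) be a partition of 2m into an even number of odd parts, each occurring at most twice. Define a_i = (λ_{2l+1−i} − 1)/2 + ⌊i/2⌋ for 1 ≤ i ≤ 2l. Then the sequence (a_1, a_2, ..., a_{2l}) is nondecreasing: a_1 ≤ a_2 ≤ ... ≤ a_{2l}. -/

import Mathlib

/-- Let `λ = (λ_1 ≥ … ≥ λ_{2l} > 0)` be a partition of `2m` into an even number of odd
parts, each occurring at most twice (here `f k = λ_{k+1}`). Then the entries
`a_i = (λ_{2l+1−i} − 1)/2 + ⌊i/2⌋` form a nondecreasing sequence. -/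
theorem stmt11 (m l : ℕ) (f : ℕ → ℕ) (hl : 1 ≤ l)
    (hmono : ∀ k, f (k + 1) ≤ f k)
    (hpos : ∀ k, k < 2 * l → 0 < f k)
    (hzero : ∀ k, 2 * l ≤ k → f k = 0)
    (hsum : ∑ k ∈ Finset.range (2 * l), f k = 2 * m)
    (hodd : ∀ k, k < 2 * l → Odd (f k))
    (hmult : ∀ k, k + 2 < 2 * l → f (k + 2) < f k) :
    ∀ i, 1 ≤ i → i < 2 * l →
      (f (2 * l - i) - 1) / 2 + i / 2 ≤ (f (2 * l - (i + 1)) - 1) / 2 + (i + 1) / 2 := by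
  intro i h1 h2
  have hidx : 2 * l - (i + 1) + 1 = 2 * l - i := by omega
  have hf : f (2 * l - i) ≤ f (2 * l - (i + 1)) := by
    have := hmono (2 * l - (i + 1)); rwa [hidx] at this
  exact Nat.add_le_add (Nat.div_le_div_right (Nat.sub_le_sub_right hf 1))
    (Nat.div_le_div_right (Nat.le_succ i))
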